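/- For every natural number m and every natural number j with 0 ≤ j ≤ m−1, the sum ∑_{k=0}^{m−j−1} (−1)^k · C(2m−j, m+k+1) · C(m+k, k) equals 1. -/

import Mathlib

lemma choose_key (m n k : ℕ) (hk : k ≤ n) :
    (m + n).choose (m + k) * (m + k).choose k = (m + n).choose m * n.choose k := by
  have h1 : (m + k).choose k = (m + k).choose m := by
    rw [Nat.add_comm m k]; exact Nat.choose_symm_add
  rw [h1, Nat.choose_mul (by omega)]
  congr 2 <;> omega

lemma aux_sum (m : ℕ) : ∀ n, 1 ≤ n →
    ∑ k ∈ Finset.range n,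
      (-1 : ℤ) ^ k * ((m + n).choose (m + k + 1) : ℤ) * ((m + k).choose k : ℤ) = 1 := by
  intro n
  induction n with
  | zero => omega
  | succ n ih =>
    intro _
    rcases Nat.eq_zero_or_pos n with hn | hn
    · subst hn; simp
    have key : ∀ k, (m + (n + 1)).choose (m + k + 1)
        = (m + n).choose (m + k) + (m + n).choose (m + k + 1) := by
      intro k
      have : m + (n + 1) = (m + n) + 1 := by omega
      rw [this]
      exact Nat.choose_succ_succ (m + n) (m + k)
    have split : ∑ k ∈ Finset.range (n + 1),
        (-1 : ℤ) ^ k * ((m + (n + 1)).choose (m + k + 1) : ℤ) * ((m + k).choose k : ℤ)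
        = (∑ k ∈ Finset.range (n + 1),
            (-1 : ℤ) ^ k * ((m + n).choose (m + k + 1) : ℤ) * ((m + k).choose k : ℤ))
          + ∑ k ∈ Finset.range (n + 1),
            (-1 : ℤ) ^ k * ((m + n).choose (m + k) : ℤ) * ((m + k).choose k : ℤ) := by
      rw [← Finset.sum_add_distrib]
      apply Finset.sum_congr rfl
      intro k _
      rw [key k]
      push_cast
      ring
    rw [split]
    have hA : ∑ k ∈ Finset.range (n + 1),
        (-1 : ℤ) ^ k * ((m + n).choose (m + k + 1) : ℤ) * ((m + k).choose k : ℤ) = 1 := by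
      rw [Finset.sum_range_succ, ih hn]
      have : (m + n).choose (m + n + 1) = 0 := Nat.choose_eq_zero_of_lt (by omega)
      rw [this]
      simp
    have hB : ∑ k ∈ Finset.range (n + 1),
        (-1 : ℤ) ^ k * ((m + n).choose (m + k) : ℤ) * ((m + k).choose k : ℤ) = 0 := by
      have : ∀ k ∈ Finset.range (n + 1),
          (-1 : ℤ) ^ k * ((m + n).choose (m + k) : ℤ) * ((m + k).choose k : ℤ)
          = ((m + n).choose m : ℤ) * ((-1 : ℤ) ^ k * (n.choose k : ℤ)) := by
        intro k hk
        simp only [Finset.mem_range] at hk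
        have := choose_key m n k (by omega)
        have h2 : ((m + n).choose (m + k) : ℤ) * ((m + k).choose k : ℤ)
            = ((m + n).choose m : ℤ) * (n.choose k : ℤ) := by exact_mod_cast this
        calc (-1 : ℤ) ^ k * ((m + n).choose (m + k) : ℤ) * ((m + k).choose k : ℤ)
            = (-1 : ℤ) ^ k * (((m + n).choose (m + k) : ℤ) * ((m + k).choose k : ℤ)) := by ring
          _ = ((m + n).choose m : ℤ) * ((-1 : ℤ) ^ k * (n.choose k : ℤ)) := by rw [h2]; ring
      rw [Finset.sum_congr rfl this, ← Finset.mul_sum,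
        Int.alternating_sum_range_choose_of_ne (by omega), mul_zero]
    rw [hA, hB]
    ring

/-- For every `m` and every `j` with `0 ≤ j ≤ m - 1`,
`∑_{k=0}^{m-j-1} (-1)^k C(2m-j, m+k+1) C(m+k, k) = 1`. -/
theorem binom_alternating_sum_reindexed (m j : ℕ) (hj : j + 1 ≤ m) :
    ∑ k ∈ Finset.range (m - j),
      (-1 : ℤ) ^ k * ((2 * m - j).choose (m + k + 1) : ℤ) * ((m + k).choose k : ℤ) = 1 := by
  have h2 : 2 * m - j = m + (m - j) := by omega
  rw [h2]
  exact aux_sum m (m - j) (by omega)
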